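/- For every ω-sequence T̄ = ⟨T_n : n < ω⟩ of (2,2)-trees, the following are equivalent: (a) degsq(T̄) = ∞; (b) degsq(T̄) ≥ ω₁; (c) the set ⋃_{n<ω} lim(T_n) contains a perfect square P × P with P ⊆ 2^ω a nonempty perfect set. -/

import Mathlib

open FirstOrder Cardinal

namespace Sh522


/-- A `(2,2)`-tree: a set of pairs `(σ, τ)` with `σ, τ ∈ 2^n`, closed under
simultaneous restriction. -/
structure Tree2 : Type where
  mem : ∀ n : ℕ, Set ((Fin n → Bool) × (Fin n → Bool))
  closed : ∀ (n : ℕ) (x : (Fin n → Bool) × (Fin n → Bool)),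
    x ∈ mem n → ∀ (m : ℕ) (h : m ≤ n),
      ((fun i => x.1 (Fin.castLE h i)), (fun i => x.2 (Fin.castLE h i))) ∈ mem m

/-- `lim T = {(η,ν) ∈ 2^ω × 2^ω : ∀ n, (η↾n, ν↾n) ∈ T}`. -/
def lim2 (T : Tree2) : Set ((ℕ → Bool) × (ℕ → Bool)) :=
  {p | ∀ n : ℕ, ((fun i : Fin n => p.1 i), (fun i : Fin n => p.2 i)) ∈ T.mem n}

/-- The domain of the square degree: pairs `(u, g)` with `u ⊆ 2^n` and
`g` a 2-place `ω`-valued function (only its values on `u` matter). -/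
def PfAp : Type :=
  Σ n : ℕ, Set (Fin n → Bool) × ((Fin n → Bool) → (Fin n → Bool) → ℕ)

/-- `degsq_{T̄}(u,g) ≥ −1` : `u` is nonempty and `(η,ν) ∈ T_{g(η,ν)}` for `η,ν ∈ u`. -/
def degsqBase (Tb : ℕ → Tree2) (x : PfAp) : Prop :=
  x.2.1.Nonempty ∧ ∀ η ∈ x.2.1, ∀ ν ∈ x.2.1, (η, ν) ∈ (Tb (x.2.2 η ν)).mem x.1

/-- The successor step for the square degree: `degsq_{T̄}(u,g) ≥ β + 1` where `P`
is `degsq_{T̄}(−) ≥ β`. -/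
def degsqStep (P : PfAp → Prop) (x : PfAp) : Prop :=
  x.2.1.Nonempty ∧
  ∀ ρ ∈ x.2.1, ∃ (m : ℕ) (hle : x.1 ≤ m) (u : Set (Fin m → Bool))
      (g : (Fin m → Bool) → (Fin m → Bool) → ℕ)
      (h : Fin 2 → (Fin x.1 → Bool) → (Fin m → Bool)),
    (∀ (i : Fin 2), ∀ η ∈ x.2.1, ∀ j : Fin x.1, h i η (Fin.castLE hle j) = η j) ∧
    (∀ η ∈ x.2.1, (h 0 η = h 1 η ↔ η ≠ ρ)) ∧
    u = h 0 '' x.2.1 ∪ h 1 '' x.2.1 ∧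
    (∀ (i : Fin 2), ∀ η ∈ x.2.1, ∀ ν ∈ x.2.1, g (h i η) (h i ν) = x.2.2 η ν) ∧
    P ⟨m, u, g⟩

/-- `degsqGe T̄ α x` says `degsq_{T̄}(x) ≥ α` (for ordinals `α ≥ 0`). -/
noncomputable def degsqGe (Tb : ℕ → Tree2) (α : Ordinal.{0}) : PfAp → Prop :=
  Ordinal.limitRecOn (motive := fun _ => PfAp → Prop) α
    (degsqStep (degsqBase Tb))
    (fun _ ih => degsqStep ih)
    (fun o _ ih x => ∀ (β : Ordinal.{0}) (h : β < o), ih β h x)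


-- ### basic infrastructure

/-- restriction of a string to a shorter length -/
def dn {n m : ℕ} (h : n ≤ m) (σ : Fin m → Bool) : Fin n → Bool := fun j => σ (Fin.castLE h j)

/-- restriction of a branch to a finite string -/
def res (x : ℕ → Bool) (n : ℕ) : Fin n → Bool := fun j => x j

lemma dn_res {n m : ℕ} (h : n ≤ m) (x : ℕ → Bool) : dn h (res x m) = res x n := rfl

lemma dn_dn {n m k : ℕ} (h1 : n ≤ m) (h2 : m ≤ k) (σ : Fin k → Bool) :
    dn h1 (dn h2 σ) = dn (h1.trans h2) σ := rfl

lemma dn_self {n : ℕ} (σ : Fin n → Bool) : dn (le_refl n) σ = σ := rfl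

lemma Tree2.mem_dn (T : Tree2) {n m : ℕ} (h : n ≤ m) {σ τ : Fin m → Bool}
    (hst : (σ, τ) ∈ T.mem m) : (dn h σ, dn h τ) ∈ T.mem n :=
  T.closed m (σ, τ) hst n h

lemma degsqStep_mono {P Q : PfAp → Prop} (hPQ : ∀ y, P y → Q y) :
    ∀ x, degsqStep P x → degsqStep Q x := by
  rintro x ⟨hne, hs⟩
  refine ⟨hne, fun ρ hρ => ?_⟩
  obtain ⟨m, hle, u, g, h, h1, h2, h3, h4, h5⟩ := hs ρ hρ
  exact ⟨m, hle, u, g, h, h1, h2, h3, h4, hPQ _ h5⟩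

lemma degsqStep_base (Tb : ℕ → Tree2) :
    ∀ x, degsqStep (degsqBase Tb) x → degsqBase Tb x := by
  rintro ⟨n, u, g⟩ ⟨hne, hs⟩
  refine ⟨hne, fun η hη ν hν => ?_⟩
  obtain ⟨m, hle, u', g', h, h1, h2, h3, h4, h5⟩ := hs η hη
  have hmem : (h 0 η, h 0 ν) ∈ (Tb (g' (h 0 η) (h 0 ν))).mem m := by
    refine h5.2 (h 0 η) ?_ (h 0 ν) ?_
    · rw [h3]; exact Set.mem_union_left _ ⟨η, hη, rfl⟩
    · rw [h3]; exact Set.mem_union_left _ ⟨ν, hν, rfl⟩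
  rw [h4 0 η hη ν hν] at hmem
  have := (Tb (g η ν)).mem_dn hle hmem
  have e1 : dn hle (h 0 η) = η := funext fun j => h1 0 η hη j
  have e2 : dn hle (h 0 ν) = ν := funext fun j => h1 0 ν hν j
  rwa [e1, e2] at this

lemma degsqGe_zero (Tb : ℕ → Tree2) : degsqGe Tb 0 = degsqStep (degsqBase Tb) :=
  Ordinal.limitRecOn_zero _ _ _

lemma degsqGe_succ (Tb : ℕ → Tree2) (α : Ordinal.{0}) :
    degsqGe Tb (Order.succ α) = degsqStep (degsqGe Tb α) :=
  Ordinal.limitRecOn_succ _ _ _ _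

lemma degsqGe_limit (Tb : ℕ → Tree2) {α : Ordinal.{0}} (h : Order.IsSuccLimit α) (x : PfAp) :
    degsqGe Tb α x ↔ ∀ β < α, degsqGe Tb β x := by
  show (Ordinal.limitRecOn (motive := fun _ => PfAp → Prop) α _ _ _) x ↔ _
  rw [Ordinal.limitRecOn_limit _ _ _ _ h]
  exact ⟨fun H β hβ => H β hβ, fun H β hβ => H β hβ⟩

lemma degsqGe_succ_le (Tb : ℕ → Tree2) :
    ∀ α : Ordinal.{0}, ∀ x, degsqGe Tb (Order.succ α) x → degsqGe Tb α x := by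
  intro α
  induction α using Ordinal.induction with
  | _ α IH =>
    rcases Ordinal.zero_or_succ_or_isSuccLimit α with h0 | ⟨β, hβ⟩ | hlim
    · subst h0
      rw [degsqGe_succ, degsqGe_zero]
      exact fun x => degsqStep_mono (degsqStep_base Tb) x
    · subst hβ
      rw [degsqGe_succ]
      intro x hx
      rw [degsqGe_succ]
      exact degsqStep_mono (IH β (Order.lt_succ β)) x hx
    · rw [degsqGe_succ]
      intro x hx
      rw [degsqGe_limit Tb hlim]
      intro β hβ
      have hx' : degsqStep (degsqGe Tb β) x :=
        degsqStep_mono (fun y hy => (degsqGe_limit Tb hlim y).1 hy β hβ) x hx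
      rw [← degsqGe_succ] at hx'
      exact IH β hβ x hx'

lemma degsqGe_mono (Tb : ℕ → Tree2) :
    ∀ α β : Ordinal.{0}, β ≤ α → ∀ x, degsqGe Tb α x → degsqGe Tb β x := by
  intro α
  induction α using Ordinal.induction with
  | _ α IH =>
    intro β hβ x hx
    rcases eq_or_lt_of_le hβ with rfl | hlt
    · exact hx
    rcases Ordinal.zero_or_succ_or_isSuccLimit α with h0 | ⟨γ, hγ⟩ | hlim
    · exact absurd hlt (by simp [h0])
    · subst hγ
      exact IH γ (Order.lt_succ γ) β (Order.lt_succ_iff.1 hlt) x (degsqGe_succ_le Tb γ x hx)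
    · exact (degsqGe_limit Tb hlim x).1 hx β hlt

/-- From an abstract "good" set one gets all degrees. -/
lemma good_to_all (Tb : ℕ → Tree2) (S : PfAp → Prop)
    (hstep : ∀ x, S x → degsqStep S x) (hbase : ∀ x, S x → degsqBase Tb x) :
    ∀ α : Ordinal.{0}, ∀ x, S x → degsqGe Tb α x := by
  intro α
  induction α using Ordinal.induction with
  | _ α IH =>
    intro x hx
    rcases Ordinal.zero_or_succ_or_isSuccLimit α with h0 | ⟨β, hβ⟩ | hlim
    · subst h0; rw [degsqGe_zero]
      exact degsqStep_mono hbase x (hstep x hx)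
    · subst hβ; rw [degsqGe_succ]
      exact degsqStep_mono (IH β (Order.lt_succ β)) x (hstep x hx)
    · rw [degsqGe_limit Tb hlim]
      exact fun β hβ => IH β hβ x hx


-- ### Part 2 : pigeonhole at ω₁

instance : Countable PfAp :=
  inferInstanceAs (Countable (Σ n : ℕ, Set (Fin n → Bool) × ((Fin n → Bool) → (Fin n → Bool) → ℕ)))

lemma omega1_pos : (0 : Ordinal.{0}) < (Cardinal.aleph 1).ord :=
  (Cardinal.isSuccLimit_ord (Cardinal.aleph0_le_aleph 1)).pos

lemma omega1_isLimit : Order.IsSuccLimit ((Cardinal.aleph 1).ord) :=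
  Cardinal.isSuccLimit_ord (Cardinal.aleph0_le_aleph 1)

lemma exists_cofinal_fiber {Y : Type} [Countable Y]
    (f : {β : Ordinal.{0} // β < (Cardinal.aleph 1).ord} → Y) :
    ∃ y : Y, ∀ γ : Ordinal.{0}, γ < (Cardinal.aleph 1).ord →
      ∃ β : {β : Ordinal.{0} // β < (Cardinal.aleph 1).ord}, γ ≤ β.1 ∧ f β = y := by
  by_contra hc
  push_neg at hc
  choose γ hγlt hγ using hc
  have hsup : (⨆ y, γ y) < (Cardinal.aleph 1).ord := by
    apply Ordinal.iSup_lt_ord ?_ hγlt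
    rw [Cardinal.isRegular_aleph_one.cof_eq]
    exact lt_of_le_of_lt Cardinal.mk_le_aleph0 Cardinal.aleph0_lt_aleph_one
  exact hγ (f ⟨_, hsup⟩) ⟨_, hsup⟩ (Ordinal.le_iSup γ _) rfl

/-- The set of configurations of uncountable degree. -/
def Sω1 (Tb : ℕ → Tree2) (x : PfAp) : Prop :=
  ∀ β < (Cardinal.aleph 1).ord, degsqGe Tb β x

lemma Sω1_base (Tb : ℕ → Tree2) : ∀ x, Sω1 Tb x → degsqBase Tb x := by
  intro x hx
  have h0 : degsqGe Tb 0 x := hx 0 omega1_pos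
  rw [degsqGe_zero] at h0
  exact degsqStep_base Tb x h0

lemma Sω1_nonempty (Tb : ℕ → Tree2)
    (hb : ∀ β < (Cardinal.aleph 1).ord, ∃ x : PfAp, degsqGe Tb β x) :
    ∃ x, Sω1 Tb x := by
  classical
  set f : {β : Ordinal.{0} // β < (Cardinal.aleph 1).ord} → PfAp :=
    fun β => (hb β.1 β.2).choose with hf
  obtain ⟨y, hy⟩ := exists_cofinal_fiber f
  refine ⟨y, fun β hβ => ?_⟩
  obtain ⟨β', hle, hfy⟩ := hy β hβ
  have hspec := (hb β'.1 β'.2).choose_spec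
  simp only [hf] at hfy
  exact degsqGe_mono Tb β'.1 β hle y (by rw [← hfy]; exact hspec)

lemma Sω1_step (Tb : ℕ → Tree2) : ∀ x, Sω1 Tb x → degsqStep (Sω1 Tb) x := by
  classical
  intro x hx
  have hne : x.2.1.Nonempty := (Sω1_base Tb x hx).1
  refine ⟨hne, fun ρ hρ => ?_⟩
  -- witness type
  let W := Σ m : ℕ, Set (Fin m → Bool) × ((Fin m → Bool) → (Fin m → Bool) → ℕ) ×
      (Fin 2 → (Fin x.1 → Bool) → (Fin m → Bool))
  let cfg : W → PfAp := fun w => ⟨w.1, w.2.1, w.2.2.1⟩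
  let PropsW : W → Prop := fun w => ∃ hle : x.1 ≤ w.1,
    (∀ (i : Fin 2), ∀ η ∈ x.2.1, ∀ j : Fin x.1, w.2.2.2 i η (Fin.castLE hle j) = η j) ∧
    (∀ η ∈ x.2.1, (w.2.2.2 0 η = w.2.2.2 1 η ↔ η ≠ ρ)) ∧
    w.2.1 = w.2.2.2 0 '' x.2.1 ∪ w.2.2.2 1 '' x.2.1 ∧
    (∀ (i : Fin 2), ∀ η ∈ x.2.1, ∀ ν ∈ x.2.1, w.2.2.1 (w.2.2.2 i η) (w.2.2.2 i ν) = x.2.2 η ν)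
  have key : ∀ β : {β : Ordinal.{0} // β < (Cardinal.aleph 1).ord},
      ∃ w : W, PropsW w ∧ degsqGe Tb β.1 (cfg w) := by
    rintro ⟨β, hβ⟩
    have hsucc : degsqGe Tb (Order.succ β) x := hx _ (omega1_isLimit.succ_lt hβ)
    rw [degsqGe_succ] at hsucc
    obtain ⟨m, hle, u, g, h, h1, h2, h3, h4, h5⟩ := hsucc.2 ρ hρ
    exact ⟨⟨m, u, g, h⟩, ⟨hle, h1, h2, h3, h4⟩, h5⟩
  have : Countable W := by
    exact inferInstanceAs (Countable (Σ m : ℕ, Set (Fin m → Bool) ×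
      ((Fin m → Bool) → (Fin m → Bool) → ℕ) × (Fin 2 → (Fin x.1 → Bool) → (Fin m → Bool))))
  choose f hf1 hf2 using key
  obtain ⟨w, hw⟩ := exists_cofinal_fiber f
  have hSw : Sω1 Tb (cfg w) := by
    intro β hβ
    obtain ⟨β', hle', hfeq⟩ := hw β hβ
    have := hf2 β'
    rw [hfeq] at this
    exact degsqGe_mono Tb β'.1 β hle' _ this
  obtain ⟨β₀, _, hf0⟩ := hw 0 omega1_pos
  have hprops : PropsW w := hf0 ▸ hf1 β₀
  obtain ⟨hle, p1, p2, p3, p4⟩ := hprops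
  exact ⟨w.1, hle, w.2.1, w.2.2.1, w.2.2.2, p1, p2, p3, p4, hSw⟩


-- ### Part 3 : fusion — from a good set to a perfect square

/-- Refinement relation between configurations. -/
def RbAux (x y : PfAp) (hle : x.1 ≤ y.1) : Prop :=
  (∀ τ ∈ y.2.1, dn hle τ ∈ x.2.1) ∧
  (∀ τ ∈ y.2.1, ∀ τ' ∈ y.2.1, (dn hle τ ≠ dn hle τ' ∨ τ = τ') →
      y.2.2 τ τ' = x.2.2 (dn hle τ) (dn hle τ')) ∧
  (∀ σ ∈ x.2.1, ∃ τ ∈ y.2.1, dn hle τ = σ)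

def TwoExtAux (y : PfAp) {n : ℕ} (hle : n ≤ y.1) (σ : Fin n → Bool) : Prop :=
  ∃ τ ∈ y.2.1, ∃ τ' ∈ y.2.1, τ ≠ τ' ∧ dn hle τ = σ ∧ dn hle τ' = σ

lemma RbAux_refl (x : PfAp) : RbAux x x (le_refl _) :=
  ⟨fun τ hτ => hτ, fun τ _ τ' _ _ => rfl, fun σ hσ => ⟨σ, hσ, rfl⟩⟩

lemma RbAux_trans {x y z : PfAp} {h1 : x.1 ≤ y.1} {h2 : y.1 ≤ z.1}
    (H1 : RbAux x y h1) (H2 : RbAux y z h2) : RbAux x z (h1.trans h2) := by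
  have hdn : ∀ τ : Fin z.1 → Bool, dn (h1.trans h2) τ = dn h1 (dn h2 τ) := fun τ => rfl
  refine ⟨fun τ hτ => ?_, fun τ hτ τ' hτ' hc => ?_, fun σ hσ => ?_⟩
  · rw [hdn]; exact H1.1 _ (H2.1 τ hτ)
  · have hc2 : dn h2 τ ≠ dn h2 τ' ∨ τ = τ' := by
      rcases hc with hne | rfl
      · left; intro he; exact hne (by rw [hdn, hdn, he])
      · right; rfl
    have e1 := H2.2.1 τ hτ τ' hτ' hc2
    have hc1 : dn h1 (dn h2 τ) ≠ dn h1 (dn h2 τ') ∨ dn h2 τ = dn h2 τ' := by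
      rcases hc with hne | rfl
      · left; rw [← hdn, ← hdn]; exact hne
      · right; rfl
    have e2 := H1.2.1 _ (H2.1 τ hτ) _ (H2.1 τ' hτ') hc1
    rw [e1, e2, hdn, hdn]
  · obtain ⟨τ, hτ, hdτ⟩ := H1.2.2 σ hσ
    obtain ⟨τ', hτ', hdτ'⟩ := H2.2.2 τ hτ
    exact ⟨τ', hτ', by rw [hdn, hdτ', hdτ]⟩

section Fusion

variable (Tb : ℕ → Tree2) (S : PfAp → Prop)

/-- one refined application of the step, splitting at `ρ`. -/
lemma step_refined (hstep : ∀ x, S x → degsqStep S x)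
    (x : PfAp) (hx : S x) (ρ : Fin x.1 → Bool) (hρ : ρ ∈ x.2.1) :
    ∃ y : PfAp, S y ∧ ∃ hlt : x.1 < y.1,
      RbAux x y hlt.le ∧ TwoExtAux y hlt.le ρ ∧
      ∀ σ ∈ x.2.1, ∃ τ ∈ y.2.1, dn hlt.le τ = σ := by
  obtain ⟨m, hle, u, g, h, h1, h2, h3, h4, h5⟩ := (hstep x hx).2 ρ hρ
  have hdn : ∀ i : Fin 2, ∀ η ∈ x.2.1, dn hle (h i η) = η := by
    intro i η hη; funext j; exact h1 i η hη j
  have hsplit : h 0 ρ ≠ h 1 ρ := fun he => ((h2 ρ hρ).1 he) rfl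
  have hlt : x.1 < m := by
    rcases lt_or_eq_of_le hle with hlt | heq
    · exact hlt
    · exfalso
      apply hsplit
      funext j'
      have e : ∀ i : Fin 2, h i ρ j' = ρ (Fin.cast heq.symm j') := by
        intro i
        have := h1 i ρ hρ (Fin.cast heq.symm j')
        have ej : Fin.castLE hle (Fin.cast heq.symm j') = j' := by
          apply Fin.ext; rfl
        rwa [ej] at this
      rw [e 0, e 1]
  have hmemu : ∀ i : Fin 2, ∀ η ∈ x.2.1, h i η ∈ u := by
    intro i η hη
    rw [h3]
    have : i = 0 ∨ i = 1 := by omega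
    rcases this with rfl | rfl
    · exact Set.mem_union_left _ ⟨η, hη, rfl⟩
    · exact Set.mem_union_right _ ⟨η, hη, rfl⟩
  have hsame : ∀ i : Fin 2, ∀ η ∈ x.2.1, η ≠ ρ → h i η = h 0 η := by
    intro i η hη hne
    have hi : i = 0 ∨ i = 1 := by omega
    rcases hi with rfl | rfl
    · rfl
    · exact ((h2 η hη).2 hne).symm
  refine ⟨⟨m, u, g⟩, h5, hlt, ⟨?proj, ?coh, ?ext⟩, ?two, ?ext2⟩
  case proj =>
    intro τ hτ
    rw [h3] at hτ
    rcases hτ with ⟨η, hη, rfl⟩ | ⟨η, hη, rfl⟩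
    · rw [hdn 0 η hη]; exact hη
    · rw [hdn 1 η hη]; exact hη
  case coh =>
    intro τ hτ τ' hτ' hc
    rw [h3] at hτ hτ'
    obtain ⟨i, η, hη, he⟩ : ∃ (i : Fin 2) (η : Fin x.1 → Bool), η ∈ x.2.1 ∧ h i η = τ := by
      rcases hτ with ⟨η, hη, he⟩ | ⟨η, hη, he⟩
      exacts [⟨0, η, hη, he⟩, ⟨1, η, hη, he⟩]
    obtain ⟨i', ν, hν, he'⟩ : ∃ (i' : Fin 2) (ν : Fin x.1 → Bool), ν ∈ x.2.1 ∧ h i' ν = τ' := by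
      rcases hτ' with ⟨ν, hν, he'⟩ | ⟨ν, hν, he'⟩
      exacts [⟨0, ν, hν, he'⟩, ⟨1, ν, hν, he'⟩]
    show g τ τ' = x.2.2 (dn hle τ) (dn hle τ')
    rw [← he, ← he', hdn i η hη, hdn i' ν hν]
    have hc' : η ≠ ν ∨ h i η = h i' ν := by
      rcases hc with hne | heq
      · left
        intro hεν
        apply hne
        show dn hle τ = dn hle τ'
        rw [← he, ← he', hdn i η hη, hdn i' ν hν, hεν]
      · right; rw [he, he']; exact heq
    rcases hc' with hne | heq
    · by_cases hηρ : η = ρ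
      · have hνρ : ν ≠ ρ := fun hh => hne (hηρ.trans hh.symm)
        rw [hsame i' ν hν hνρ, ← hsame i ν hν hνρ]
        exact h4 i _ hη _ hν
      · by_cases hνρ : ν = ρ
        · rw [hsame i η hη hηρ, ← hsame i' η hη hηρ]
          exact h4 i' _ hη _ hν
        · rw [hsame i η hη hηρ, hsame i' ν hν hνρ]
          exact h4 0 _ hη _ hν
    · have hεν : η = ν := by rw [← hdn i η hη, heq, hdn i' ν hν]
      subst hεν
      rw [← heq]
      exact h4 i _ hη _ hη
  case ext =>
    intro σ hσ
    exact ⟨h 0 σ, hmemu 0 σ hσ, hdn 0 σ hσ⟩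
  case two =>
    exact ⟨h 0 ρ, hmemu 0 ρ hρ, h 1 ρ, hmemu 1 ρ hρ, hsplit, hdn 0 ρ hρ, hdn 1 ρ hρ⟩
  case ext2 =>
    intro σ hσ
    exact ⟨h 0 σ, hmemu 0 σ hσ, hdn 0 σ hσ⟩

/-- a full round : split every element of a list. -/
lemma round (hstep : ∀ x, S x → degsqStep S x) (x : PfAp) (hx : S x)
    (v : List (Fin x.1 → Bool)) (hv : ∀ σ ∈ v, σ ∈ x.2.1) :
    ∃ y : PfAp, S y ∧ ∃ hle : x.1 ≤ y.1,
      RbAux x y hle ∧ (v ≠ [] → x.1 < y.1) ∧ ∀ σ ∈ v, TwoExtAux y hle σ := by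
  induction v with
  | nil => exact ⟨x, hx, le_refl _, RbAux_refl x, fun hne => absurd rfl hne, fun σ hσ => absurd hσ List.not_mem_nil⟩
  | cons σ v' IH =>
    obtain ⟨y', hy', hle', hRb', _, htwo'⟩ := IH (fun τ hτ => hv τ (List.mem_cons_of_mem σ hτ))
    have hσx : σ ∈ x.2.1 := hv σ List.mem_cons_self
    obtain ⟨τρ, hτρ, hdτρ⟩ := hRb'.2.2 σ hσx
    obtain ⟨y'', hy'', hlt'', hRb'', htwoρ, hext''⟩ := step_refined S hstep y' hy' τρ hτρ
    have hle : x.1 ≤ y''.1 := hle'.trans hlt''.le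
    have hRb : RbAux x y'' hle := RbAux_trans hRb' hRb''
    refine ⟨y'', hy'', hle, hRb, fun _ => lt_of_le_of_lt hle' hlt'', ?_⟩
    intro σ' hσ'
    rcases List.mem_cons.1 hσ' with rfl | hσ'v
    · obtain ⟨τa, hτa, τb, hτb, hab, hda, hdb⟩ := htwoρ
      refine ⟨τa, hτa, τb, hτb, hab, ?_, ?_⟩
      · show dn hle τa = σ'
        have : dn hle τa = dn hle' (dn hlt''.le τa) := rfl
        rw [this, hda, hdτρ]
      · have : dn hle τb = dn hle' (dn hlt''.le τb) := rfl
        rw [this, hdb, hdτρ]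
    · obtain ⟨τa, hτa, τb, hτb, hab, hda, hdb⟩ := htwo' σ' hσ'v
      obtain ⟨τa', hτa', hda'⟩ := hext'' τa hτa
      obtain ⟨τb', hτb', hdb'⟩ := hext'' τb hτb
      refine ⟨τa', hτa', τb', hτb', ?_, ?_, ?_⟩
      · intro he; rw [he] at hda'; rw [hda'] at hdb'; exact hab (hdb'.symm ▸ rfl)
      · have : dn hle τa' = dn hle' (dn hlt''.le τa') := rfl
        rw [this, hda', hda]
      · have : dn hle τb' = dn hle' (dn hlt''.le τb') := rfl
        rw [this, hdb', hdb]

end Fusion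


-- ### topological helpers

lemma cylinder_subset_of_mem_nhds {x : ℕ → Bool} {U : Set (ℕ → Bool)} (hU : U ∈ nhds x) :
    ∃ N : ℕ, ∀ y : ℕ → Bool, (∀ i < N, y i = x i) → y ∈ U := by
  obtain ⟨V, hVU, hVopen, hxV⟩ := mem_nhds_iff.1 hU
  obtain ⟨I, w, h1, h2⟩ := isOpen_pi_iff.1 hVopen x hxV
  refine ⟨(I.sup id) + 1, fun y hy => hVU (h2 ?_)⟩
  intro a ha
  have : y a = x a := hy a (by have := Finset.le_sup (f := id) ha; simp at this; omega)
  rw [this]; exact (h1 a ha).2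

lemma isClosed_res_mem (n : ℕ) (A : Set (Fin n → Bool)) :
    IsClosed {x : ℕ → Bool | res x n ∈ A} := by
  have hcont : Continuous (fun x : ℕ → Bool => res x n) :=
    continuous_pi (fun j => continuous_apply (j : ℕ))
  exact (isClosed_discrete A).preimage hcont

-- ### the fusion

lemma good_to_perfect (Tb : ℕ → Tree2) (S : PfAp → Prop)
    (hstep : ∀ x, S x → degsqStep S x) (hbase : ∀ x, S x → degsqBase Tb x)
    (x₀ : PfAp) (hx₀ : S x₀) :
    ∃ P : Set (ℕ → Bool), Perfect P ∧ P.Nonempty ∧ P ×ˢ P ⊆ ⋃ n : ℕ, lim2 (Tb n) := by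
  classical
  have next : ∀ x : PfAp, S x → ∃ y : PfAp, S y ∧ ∃ hlt : x.1 < y.1,
      RbAux x y hlt.le ∧ ∀ σ ∈ x.2.1, TwoExtAux y hlt.le σ := by
    intro x hx
    have hfin : x.2.1.Finite := Set.toFinite _
    have hvmem : ∀ σ ∈ hfin.toFinset.toList, σ ∈ x.2.1 :=
      fun σ hσ => hfin.mem_toFinset.1 (Finset.mem_toList.1 hσ)
    obtain ⟨y, hy, hle, hRb, hlt, htwo⟩ := round S hstep x hx hfin.toFinset.toList hvmem
    have hne : hfin.toFinset.toList ≠ [] := by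
      obtain ⟨σ, hσ⟩ := (hbase x hx).1
      exact List.ne_nil_of_mem (Finset.mem_toList.2 (hfin.mem_toFinset.2 hσ))
    exact ⟨y, hy, hlt hne, hRb,
      fun σ hσ => htwo σ (Finset.mem_toList.2 (hfin.mem_toFinset.2 hσ))⟩
  choose F hS hlt hRb htwo using next
  let seq : ℕ → {x : PfAp // S x} := fun k =>
    Nat.rec ⟨x₀, hx₀⟩ (fun _ p => ⟨F p.1 p.2, hS p.1 p.2⟩) k
  -- growth of levels
  have hgrow : ∀ k j, (seq k).1.1 + j ≤ (seq (k + j)).1.1 := by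
    intro k j
    induction j with
    | zero => exact le_refl _
    | succ j IH =>
      have h2 : (seq (k + j)).1.1 < (seq (k + j + 1)).1.1 := hlt (seq (k+j)).1 (seq (k+j)).2
      show (seq k).1.1 + (j + 1) ≤ (seq (k + j + 1)).1.1
      omega
  -- the chain of refinements
  have hchain : ∀ k j, ∃ hle : (seq k).1.1 ≤ (seq (k + j)).1.1,
      RbAux (seq k).1 (seq (k + j)).1 hle := by
    intro k j
    induction j with
    | zero => exact ⟨le_refl _, RbAux_refl _⟩
    | succ j IH =>
      obtain ⟨hle, hR⟩ := IH
      exact ⟨hle.trans (hlt (seq (k+j)).1 (seq (k+j)).2).le,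
        RbAux_trans hR (hRb (seq (k+j)).1 (seq (k+j)).2)⟩
  -- building branches
  have branch : ∀ k (σ : Fin ((seq k).1.1) → Bool), σ ∈ (seq k).1.2.1 →
      ∃ x : ℕ → Bool, (∀ l, res x ((seq l).1.1) ∈ (seq l).1.2.1) ∧
        res x ((seq k).1.1) = σ := by
    intro k σ hσ
    have E : ∀ j (τ : Fin ((seq (k + j)).1.1) → Bool), τ ∈ (seq (k + j)).1.2.1 →
        ∃ τ', τ' ∈ (seq (k + j + 1)).1.2.1 ∧
          dn (hlt (seq (k+j)).1 (seq (k+j)).2).le τ' = τ := by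
      intro j τ hτ
      obtain ⟨τ', hτ', hd⟩ := (hRb (seq (k+j)).1 (seq (k+j)).2).2.2 τ hτ
      exact ⟨τ', hτ', hd⟩
    choose Ef hEmem hEdn using E
    let t : ∀ j, {τ : Fin ((seq (k + j)).1.1) → Bool // τ ∈ (seq (k + j)).1.2.1} :=
      fun j => Nat.rec (motive := fun j => {τ : Fin ((seq (k + j)).1.1) → Bool // τ ∈ (seq (k + j)).1.2.1})
        ⟨σ, hσ⟩ (fun j p => ⟨Ef j p.1 p.2, hEmem j p.1 p.2⟩) j
    have ht_succ : ∀ j, dn (hlt (seq (k+j)).1 (seq (k+j)).2).le (t (j+1)).1 = (t j).1 :=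
      fun j => hEdn j (t j).1 (t j).2
    have hmono : ∀ a b : ℕ, a ≤ b → (seq a).1.1 ≤ (seq b).1.1 := by
      intro a b hab
      obtain ⟨d, rfl⟩ := Nat.exists_eq_add_of_le hab
      exact le_trans (Nat.le_add_right _ _) (hgrow a d)
    have hagree : ∀ (j j' : ℕ), j ≤ j' → ∀ (p : ℕ) (hp : p < (seq (k + j)).1.1)
        (hp' : p < (seq (k + j')).1.1), (t j).1 ⟨p, hp⟩ = (t j').1 ⟨p, hp'⟩ := by
      intro j j' hjj'
      induction j', hjj' using Nat.le_induction with
      | base => intro p hp hp'; rfl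
      | succ j' hjj' IH =>
        intro p hp hp'
        have hpd : p < (seq (k + j')).1.1 := lt_of_lt_of_le hp (hmono (k+j) (k+j') (by omega))
        have e1 : (t j').1 ⟨p, hpd⟩ = (t (j' + 1)).1 ⟨p, hp'⟩ := by
          rw [← ht_succ j']
          rfl
        exact (IH p hp hpd).trans e1
    have hpk : ∀ p : ℕ, p < (seq (k + (p + 1))).1.1 := by
      intro p
      have := hgrow k (p + 1)
      omega
    refine ⟨fun p => (t (p+1)).1 ⟨p, hpk p⟩, ?_, ?_⟩
    · -- membership at every level
      have hres : ∀ j, res (fun p => (t (p+1)).1 ⟨p, hpk p⟩) ((seq (k + j)).1.1) = (t j).1 := by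
        intro j
        funext q
        rcases q with ⟨p, hp⟩
        show (t (p+1)).1 ⟨p, hpk p⟩ = (t j).1 ⟨p, hp⟩
        rcases le_total (p+1) j with h | h
        · exact (hagree (p+1) j h p (hpk p) hp)
        · exact (hagree j (p+1) h p hp (hpk p)).symm
      intro l
      rcases le_or_gt k l with hkl | hlk
      · obtain ⟨j, rfl⟩ := Nat.exists_eq_add_of_le hkl
        rw [hres j]; exact (t j).2
      · obtain ⟨j, rfl⟩ := Nat.exists_eq_add_of_le hlk.le
        obtain ⟨hle, hRbc⟩ := hchain l j
        have hmem : res (fun p => (t (p+1)).1 ⟨p, hpk p⟩) ((seq (l + j)).1.1) ∈ (seq (l + j)).1.2.1 := by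
          have h2 := (t 0).2
          rw [← hres 0] at h2
          exact h2
        have := hRbc.1 _ hmem
        rwa [dn_res] at this
    · -- value at level k
      have hres0 : res (fun p => (t (p+1)).1 ⟨p, hpk p⟩) ((seq (k + 0)).1.1) = (t 0).1 := by
        funext q
        rcases q with ⟨p, hp⟩
        show (t (p+1)).1 ⟨p, hpk p⟩ = (t 0).1 ⟨p, hp⟩
        exact (hagree 0 (p+1) (Nat.zero_le _) p hp (hpk p)).symm
      exact hres0
  -- the perfect set
  set P : Set (ℕ → Bool) := {x | ∀ l, res x ((seq l).1.1) ∈ (seq l).1.2.1} with hP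
  have hmono : ∀ a b : ℕ, a ≤ b → (seq a).1.1 ≤ (seq b).1.1 := by
    intro a b hab
    obtain ⟨d, rfl⟩ := Nat.exists_eq_add_of_le hab
    exact le_trans (Nat.le_add_right _ _) (hgrow a d)
  have hPclosed : IsClosed P := by
    have : P = ⋂ l, {x : ℕ → Bool | res x ((seq l).1.1) ∈ (seq l).1.2.1} := by
      ext x; simp [hP, Set.mem_iInter]
    rw [this]
    exact isClosed_iInter (fun l => isClosed_res_mem _ _)
  have hPne : P.Nonempty := by
    obtain ⟨σ, hσ⟩ := (hbase (seq 0).1 (seq 0).2).1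
    obtain ⟨x, hx, -⟩ := branch 0 σ hσ
    exact ⟨x, hx⟩
  refine ⟨P, ⟨hPclosed, ?_⟩, hPne, ?_⟩
  · -- preperfect
    intro x hxP
    rw [accPt_iff_nhds]
    intro U hU
    obtain ⟨N, hN⟩ := cylinder_subset_of_mem_nhds hU
    have hNle : N ≤ (seq N).1.1 := by
      have h0 := hgrow 0 N
      rw [Nat.zero_add] at h0
      omega
    obtain ⟨τa, hτa, τb, hτb, hab, hda, hdb⟩ :=
      htwo (seq N).1 (seq N).2 (res x ((seq N).1.1)) (hxP N)
    have hx1 : res x ((seq (N+1)).1.1) ∈ (seq (N+1)).1.2.1 := hxP (N+1)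
    have hpick : ∃ τ, τ ∈ (seq (N+1)).1.2.1 ∧
        dn (hlt (seq N).1 (seq N).2).le τ = res x ((seq N).1.1) ∧
        τ ≠ res x ((seq (N+1)).1.1) := by
      by_cases hea : τa = res x ((seq (N+1)).1.1)
      · refine ⟨τb, hτb, hdb, ?_⟩
        rw [← hea]
        exact fun he => hab he.symm
      · exact ⟨τa, hτa, hda, hea⟩
    obtain ⟨τ, hτ, hdτ, hτne⟩ := hpick
    obtain ⟨y, hyP, hyres⟩ := branch (N+1) τ hτ
    have hyN : res y ((seq N).1.1) = res x ((seq N).1.1) := by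
      rw [← hdτ, ← hyres]
      rfl
    refine ⟨y, ⟨hN y ?_, hyP⟩, ?_⟩
    · intro i hi
      have : res y ((seq N).1.1) ⟨i, lt_of_lt_of_le hi hNle⟩ =
          res x ((seq N).1.1) ⟨i, lt_of_lt_of_le hi hNle⟩ := by rw [hyN]
      exact this
    · intro he
      exact hτne (by rw [← he]; exact hyres.symm)
  · -- the square
    rintro ⟨x, y⟩ ⟨hxP, hyP⟩
    have key : ∃ c k₀, ∀ k, k₀ ≤ k →
        (seq k).1.2.2 (res x ((seq k).1.1)) (res y ((seq k).1.1)) = c := by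
      by_cases hxy : x = y
      · subst hxy
        refine ⟨(seq 0).1.2.2 (res x ((seq 0).1.1)) (res x ((seq 0).1.1)), 0, fun k _ => ?_⟩
        obtain ⟨hle, hRbc⟩ := hchain 0 k
        have hcoh := hRbc.2.1 (res x ((seq (0+k)).1.1)) (hxP (0+k))
          (res x ((seq (0+k)).1.1)) (hxP (0+k)) (Or.inr rfl)
        rw [dn_res] at hcoh
        have e : (0 : ℕ) + k = k := Nat.zero_add k
        rw [← e]
        exact hcoh
      · obtain ⟨p, hp⟩ : ∃ p, x p ≠ y p := by
          by_contra hc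
          push_neg at hc
          exact hxy (funext hc)
        refine ⟨(seq (p+1)).1.2.2 (res x ((seq (p+1)).1.1)) (res y ((seq (p+1)).1.1)),
          p + 1, fun k hk => ?_⟩
        obtain ⟨j, rfl⟩ := Nat.exists_eq_add_of_le hk
        obtain ⟨hle, hRbc⟩ := hchain (p+1) j
        have hplt : p < (seq (p+1)).1.1 := by
          have h0 := hgrow 0 (p+1)
          rw [Nat.zero_add] at h0
          omega
        have hne : res x ((seq (p+1)).1.1) ≠ res y ((seq (p+1)).1.1) := by
          intro he
          exact hp (congrFun he ⟨p, hplt⟩)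
        have hcoh := hRbc.2.1 (res x ((seq (p+1+j)).1.1)) (hxP (p+1+j))
          (res y ((seq (p+1+j)).1.1)) (hyP (p+1+j)) ?_
        · rw [dn_res, dn_res] at hcoh
          exact hcoh
        · left
          rw [dn_res, dn_res]
          exact hne
    obtain ⟨c, k₀, hc⟩ := key
    refine Set.mem_iUnion.2 ⟨c, ?_⟩
    intro l
    obtain ⟨k, hk1, hk2⟩ : ∃ k, k₀ ≤ k ∧ l ≤ (seq k).1.1 :=
      ⟨k₀ + l, Nat.le_add_right _ _, by have h0 := hgrow k₀ l; omega⟩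
    have hb := (hbase (seq k).1 (seq k).2).2 (res x _) (hxP k) (res y _) (hyP k)
    rw [hc k hk1] at hb
    have hmem := (Tb c).mem_dn hk2 hb
    rw [dn_res, dn_res] at hmem
    exact hmem


-- ### Part 4 : from a perfect square to a good set

lemma isOpen_cyl (a : ℕ → Bool) (N : ℕ) : IsOpen {y : ℕ → Bool | ∀ i < N, y i = a i} := by
  have he : {y : ℕ → Bool | ∀ i < N, y i = a i} = ⋂ i : Fin N, {y : ℕ → Bool | y i.1 = a i.1} := by
    ext y
    simp only [Set.mem_setOf_eq, Set.mem_iInter]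
    exact ⟨fun h i => h i.1 i.2, fun h i hi => h ⟨i, hi⟩⟩
  rw [he]
  refine isOpen_iInter_of_finite fun i => ?_
  have he2 : {y : ℕ → Bool | y i.1 = a i.1} = (fun y : ℕ → Bool => y i.1) ⁻¹' {a i.1} := rfl
  rw [he2]
  exact (isOpen_discrete _).preimage (continuous_apply (i.1 : ℕ))

lemma isClosed_cyl (a : ℕ → Bool) (N : ℕ) : IsClosed {y : ℕ → Bool | ∀ i < N, y i = a i} := by
  have he : {y : ℕ → Bool | ∀ i < N, y i = a i} = ⋂ i : Fin N, {y : ℕ → Bool | y i.1 = a i.1} := by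
    ext y
    simp only [Set.mem_setOf_eq, Set.mem_iInter]
    exact ⟨fun h i => h i.1 i.2, fun h i hi => h ⟨i, hi⟩⟩
  rw [he]
  refine isClosed_iInter fun i => ?_
  have he2 : {y : ℕ → Bool | y i.1 = a i.1} = (fun y : ℕ → Bool => y i.1) ⁻¹' {a i.1} := rfl
  rw [he2]
  exact (isClosed_discrete _).preimage (continuous_apply (i.1 : ℕ))

lemma isClosed_lim2 (T : Tree2) : IsClosed (lim2 T) := by
  have he : lim2 T = ⋂ n, {p : (ℕ → Bool) × (ℕ → Bool) |
      ((fun i : Fin n => p.1 i), (fun i : Fin n => p.2 i)) ∈ T.mem n} := by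
    ext p
    simp only [lim2, Set.mem_setOf_eq, Set.mem_iInter]
  rw [he]
  refine isClosed_iInter fun n => ?_
  have hcont : Continuous (fun p : (ℕ → Bool) × (ℕ → Bool) =>
      (((fun i : Fin n => p.1 i), (fun i : Fin n => p.2 i)) : (Fin n → Bool) × (Fin n → Bool))) := by
    refine Continuous.prodMk ?_ ?_
    · exact continuous_pi fun i => (continuous_apply (i : ℕ)).comp continuous_fst
    · exact continuous_pi fun i => (continuous_apply (i : ℕ)).comp continuous_snd
  exact (isClosed_discrete _).preimage hcont

lemma baire_closed_cover {X : Type} [TopologicalSpace X] [T2Space X] [CompactSpace X]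
    (K : Set X) (hK : IsClosed K) (hne : K.Nonempty)
    (C : ℕ → Set X) (hC : ∀ n, IsClosed (C n)) (hcov : K ⊆ ⋃ n, C n) :
    ∃ (n : ℕ) (z : X) (V : Set X), z ∈ K ∧ IsOpen V ∧ z ∈ V ∧ K ∩ V ⊆ C n := by
  haveI : CompactSpace ↥K := isCompact_iff_compactSpace.1 hK.isCompact
  haveI : Nonempty ↥K := hne.to_subtype
  haveI : LocallyCompactSpace ↥K := by infer_instance
  haveI : BaireSpace ↥K := BaireSpace.of_t2Space_locallyCompactSpace
  have hfcl : ∀ n, IsClosed ((Subtype.val : ↥K → X) ⁻¹' C n) :=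
    fun n => (hC n).preimage continuous_subtype_val
  have hcover : ⋃ n, (Subtype.val : ↥K → X) ⁻¹' C n = Set.univ := by
    ext z
    simp only [Set.mem_iUnion, Set.mem_preimage, Set.mem_univ, iff_true]
    exact Set.mem_iUnion.1 (hcov z.2)
  obtain ⟨n, hint⟩ := nonempty_interior_of_iUnion_of_closed hfcl hcover
  obtain ⟨w, hw⟩ := hint
  have hnh : (Subtype.val : ↥K → X) ⁻¹' C n ∈ nhds w := mem_interior_iff_mem_nhds.1 hw
  rw [nhds_subtype_eq_comap] at hnh
  obtain ⟨V, hVnh, hVsub⟩ := Filter.mem_comap.1 hnh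
  obtain ⟨O, hOV, hOopen, hwO⟩ := mem_nhds_iff.1 hVnh
  refine ⟨n, w.1, O, w.2, hOopen, hwO, ?_⟩
  rintro z ⟨hzK, hzO⟩
  exact hVsub (show (⟨z, hzK⟩ : ↥K).1 ∈ V from hOV hzO)

lemma baire_rect (Tb : ℕ → Tree2) (A B : Set (ℕ → Bool)) (hA : Perfect A) (hAne : A.Nonempty)
    (hB : Perfect B) (hBne : B.Nonempty) (hcov : A ×ˢ B ⊆ ⋃ n, lim2 (Tb n)) :
    ∃ (n : ℕ) (A' B' : Set (ℕ → Bool)), Perfect A' ∧ A'.Nonempty ∧ A' ⊆ A ∧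
      Perfect B' ∧ B'.Nonempty ∧ B' ⊆ B ∧ A' ×ˢ B' ⊆ lim2 (Tb n) := by
  obtain ⟨n, z, V, hzK, hVopen, hzV, hKV⟩ :=
    baire_closed_cover (A ×ˢ B) (hA.closed.prod hB.closed) (hAne.prod hBne)
      (fun n => lim2 (Tb n)) (fun n => isClosed_lim2 (Tb n)) hcov
  obtain ⟨a, b⟩ := z
  obtain ⟨u, hu, v, hv, huv⟩ := mem_nhds_prod_iff.1 (hVopen.mem_nhds hzV)
  obtain ⟨N1, hN1⟩ := cylinder_subset_of_mem_nhds hu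
  obtain ⟨N2, hN2⟩ := cylinder_subset_of_mem_nhds hv
  have haA : a ∈ A := hzK.1
  have hbB : b ∈ B := hzK.2
  have hperfA := hA.closure_nhds_inter a haA (show a ∈ {y : ℕ → Bool | ∀ i < N1, y i = a i}
    from fun i _ => rfl) (isOpen_cyl a N1)
  have hperfB := hB.closure_nhds_inter b hbB (show b ∈ {y : ℕ → Bool | ∀ i < N2, y i = b i}
    from fun i _ => rfl) (isOpen_cyl b N2)
  have hclA : IsClosed ({y : ℕ → Bool | ∀ i < N1, y i = a i} ∩ A) :=
    (isClosed_cyl a N1).inter hA.closed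
  have hclB : IsClosed ({y : ℕ → Bool | ∀ i < N2, y i = b i} ∩ B) :=
    (isClosed_cyl b N2).inter hB.closed
  rw [hclA.closure_eq] at hperfA
  rw [hclB.closure_eq] at hperfB
  refine ⟨n, _, _, hperfA.1, hperfA.2, Set.inter_subset_right, hperfB.1, hperfB.2,
    Set.inter_subset_right, ?_⟩
  rintro ⟨y, w⟩ ⟨⟨hyc, hyA⟩, ⟨hwc, hwB⟩⟩
  refine hKV ⟨⟨hyA, hwB⟩, huv ⟨hN1 y hyc, hN2 w hwc⟩⟩

lemma baire_diag (Tb : ℕ → Tree2) (A : Set (ℕ → Bool)) (hA : Perfect A) (hAne : A.Nonempty)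
    (hcov : ∀ x ∈ A, (x, x) ∈ ⋃ n, lim2 (Tb n)) :
    ∃ (n : ℕ) (A' : Set (ℕ → Bool)), Perfect A' ∧ A'.Nonempty ∧ A' ⊆ A ∧
      ∀ x ∈ A', (x, x) ∈ lim2 (Tb n) := by
  have hcont : Continuous (fun x : ℕ → Bool => ((x, x) : (ℕ → Bool) × (ℕ → Bool))) :=
    continuous_id.prodMk continuous_id
  obtain ⟨n, z, V, hzK, hVopen, hzV, hKV⟩ :=
    baire_closed_cover A hA.closed hAne
      (fun n => (fun x : ℕ → Bool => ((x, x) : (ℕ → Bool) × (ℕ → Bool))) ⁻¹' lim2 (Tb n))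
      (fun n => (isClosed_lim2 (Tb n)).preimage hcont)
      (by intro x hx
          have := hcov x hx
          simpa only [Set.mem_iUnion, Set.mem_preimage] using this)
  obtain ⟨N, hN⟩ := cylinder_subset_of_mem_nhds (hVopen.mem_nhds hzV)
  have hperfA := hA.closure_nhds_inter z hzK (show z ∈ {y : ℕ → Bool | ∀ i < N, y i = z i}
    from fun i _ => rfl) (isOpen_cyl z N)
  have hclA : IsClosed ({y : ℕ → Bool | ∀ i < N, y i = z i} ∩ A) :=
    (isClosed_cyl z N).inter hA.closed
  rw [hclA.closure_eq] at hperfA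
  refine ⟨n, _, hperfA.1, hperfA.2, Set.inter_subset_right, ?_⟩
  rintro x ⟨hxc, hxA⟩
  exact hKV ⟨hxA, hN x hxc⟩


-- ### the invariant associated with a perfect square

def cylm {m : ℕ} (σ : Fin m → Bool) : Set (ℕ → Bool) := {z | ∀ j : Fin m, z j = σ j}

lemma cylm_eq_iInter {m : ℕ} (σ : Fin m → Bool) :
    cylm σ = ⋂ j : Fin m, {z : ℕ → Bool | z j.1 = σ j} := by
  ext z
  simp only [cylm, Set.mem_setOf_eq, Set.mem_iInter]

lemma isOpen_cylm {m : ℕ} (σ : Fin m → Bool) : IsOpen (cylm σ) := by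
  rw [cylm_eq_iInter]
  refine isOpen_iInter_of_finite fun j => ?_
  have he2 : {z : ℕ → Bool | z j.1 = σ j} = (fun z : ℕ → Bool => z j.1) ⁻¹' {σ j} := rfl
  rw [he2]
  exact (isOpen_discrete _).preimage (continuous_apply (j.1 : ℕ))

lemma isClosed_cylm {m : ℕ} (σ : Fin m → Bool) : IsClosed (cylm σ) := by
  rw [cylm_eq_iInter]
  refine isClosed_iInter fun j => ?_
  have he2 : {z : ℕ → Bool | z j.1 = σ j} = (fun z : ℕ → Bool => z j.1) ⁻¹' {σ j} := rfl
  rw [he2]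
  exact (isClosed_discrete _).preimage (continuous_apply (j.1 : ℕ))

def SP (Tb : ℕ → Tree2) (P : Set (ℕ → Bool)) (x : PfAp) : Prop :=
  x.2.1.Nonempty ∧ ∃ Q : (Fin x.1 → Bool) → Set (ℕ → Bool),
    (∀ η ∈ x.2.1, Perfect (Q η) ∧ (Q η).Nonempty ∧ Q η ⊆ P ∧ Q η ⊆ cylm η) ∧
    (∀ η ∈ x.2.1, ∀ ν ∈ x.2.1, η ≠ ν → Q η ×ˢ Q ν ⊆ lim2 (Tb (x.2.2 η ν))) ∧
    (∀ η ∈ x.2.1, ∀ z ∈ Q η, (z, z) ∈ lim2 (Tb (x.2.2 η η)))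

lemma SP_base (Tb : ℕ → Tree2) (P : Set (ℕ → Bool)) :
    ∀ x, SP Tb P x → degsqBase Tb x := by
  rintro ⟨n, u, g⟩ ⟨hne, Q, hQ, hrect, hdiag⟩
  refine ⟨hne, fun η hη ν hν => ?_⟩
  by_cases hεν : η = ν
  · subst hεν
    obtain ⟨z, hz⟩ := (hQ η hη).2.1
    have hmem := hdiag η hη z hz n
    have e : (fun i : Fin n => z i) = η := funext fun i => (hQ η hη).2.2.2 hz i
    rwa [e] at hmem
  · obtain ⟨z, hz⟩ := (hQ η hη).2.1
    obtain ⟨w, hw⟩ := (hQ ν hν).2.1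
    have hmem := hrect η hη ν hν hεν (Set.mk_mem_prod hz hw) n
    have e1 : (fun i : Fin n => z i) = η := funext fun i => (hQ η hη).2.2.2 hz i
    have e2 : (fun i : Fin n => w i) = ν := funext fun i => (hQ ν hν).2.2.2 hw i
    rwa [e1, e2] at hmem

lemma SP_nonempty (Tb : ℕ → Tree2) (P : Set (ℕ → Bool)) (hP : Perfect P)
    (hPne : P.Nonempty) (hsq : P ×ˢ P ⊆ ⋃ n, lim2 (Tb n)) :
    ∃ x, SP Tb P x := by
  have hcov : ∀ x ∈ P, (x, x) ∈ ⋃ n, lim2 (Tb n) := fun x hx => hsq (Set.mk_mem_prod hx hx)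
  obtain ⟨n₀, A, hAperf, hAne, hAsub, hAdiag⟩ := baire_diag Tb P hP hPne hcov
  refine ⟨⟨0, Set.univ, fun _ _ => n₀⟩, Set.univ_nonempty, fun _ => A, ?_, ?_, ?_⟩
  · exact fun η _ => ⟨hAperf, hAne, hAsub, fun z _ j => j.elim0⟩
  · exact fun η _ ν _ hne => absurd (funext fun j => j.elim0) hne
  · exact fun η _ z hz => hAdiag z hz


lemma SP_step (Tb : ℕ → Tree2) (P : Set (ℕ → Bool)) (hsq : P ×ˢ P ⊆ ⋃ n, lim2 (Tb n)) :
    ∀ x, SP Tb P x → degsqStep (SP Tb P) x := by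
  classical
  rintro ⟨n, u, g⟩ ⟨hne, Q, hQ, hrect, hdiag⟩
  refine ⟨hne, fun ρ hρ => ?_⟩
  obtain ⟨hQρperf, hQρne, hQρP, hQρcyl⟩ := hQ ρ hρ
  obtain ⟨C₀, C₁, ⟨hC0p, hC0ne, hC0sub⟩, ⟨hC1p, hC1ne, hC1sub⟩, hdisj⟩ :=
    hQρperf.splitting hQρne
  have hcov01 : C₀ ×ˢ C₁ ⊆ ⋃ k, lim2 (Tb k) :=
    fun z hz => hsq (Set.mk_mem_prod (hQρP (hC0sub hz.1)) (hQρP (hC1sub hz.2)))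
  obtain ⟨n₁, A1, B1, hA1p, hA1ne, hA1sub, hB1p, hB1ne, hB1sub, hAB1⟩ :=
    baire_rect Tb C₀ C₁ hC0p hC0ne hC1p hC1ne hcov01
  have hcov10 : B1 ×ˢ A1 ⊆ ⋃ k, lim2 (Tb k) :=
    fun z hz => hsq (Set.mk_mem_prod (hQρP (hC1sub (hB1sub hz.1))) (hQρP (hC0sub (hA1sub hz.2))))
  obtain ⟨n₂, Bs, As, hBsp, hBsne, hBssub, hAsp, hAsne, hAssub, hBA⟩ :=
    baire_rect Tb B1 A1 hB1p hB1ne hA1p hA1ne hcov10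
  have hAsQ : As ⊆ Q ρ := fun z hz => hC0sub (hA1sub (hAssub hz))
  have hBsQ : Bs ⊆ Q ρ := fun z hz => hC1sub (hB1sub (hBssub hz))
  have hASB : As ×ˢ Bs ⊆ lim2 (Tb n₁) :=
    fun z hz => hAB1 (Set.mk_mem_prod (hAssub hz.1) (hBssub hz.2))
  obtain ⟨p₀, hp₀As⟩ := hAsne
  obtain ⟨p₁, hp₁Bs⟩ := hBsne
  have hp01 : p₀ ≠ p₁ := by
    intro he
    exact (Set.disjoint_left.1 hdisj (hA1sub (hAssub hp₀As))) (he ▸ hB1sub (hBssub hp₁Bs))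
  obtain ⟨l, hl⟩ : ∃ l, p₀ l ≠ p₁ l := by
    by_contra hc
    push_neg at hc
    exact hp01 (funext hc)
  have hle : n ≤ max n (l+1) := le_max_left _ _
  have hlm : l < max n (l+1) := lt_of_lt_of_le (Nat.lt_succ_self l) (le_max_right _ _)
  set m := max n (l+1) with hm
  have hQne : ∀ η, η ∈ u → (Q η).Nonempty := fun η hη => (hQ η hη).2.1
  set pt : Fin 2 → (Fin n → Bool) → (ℕ → Bool) := fun i η =>
    if η = ρ then (if i = 0 then p₀ else p₁) else if hη : η ∈ u then (hQne η hη).some else p₀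
    with hptdef
  have hptρ0 : pt 0 ρ = p₀ := by simp [hptdef]
  have hptρ1 : pt 1 ρ = p₁ := by
    simp only [hptdef, if_pos rfl]
    norm_num
  have hptne : ∀ (i : Fin 2) (η) (hη : η ∈ u), η ≠ ρ → pt i η = (hQne η hη).some := by
    intro i η hη hne'
    simp [hptdef, hne', hη]
  have hptQ : ∀ (i : Fin 2) (η), η ∈ u → pt i η ∈ Q η := by
    intro i η hη
    by_cases hη' : η = ρ
    · subst hη'
      have hi : i = 0 ∨ i = 1 := by omega
      rcases hi with rfl | rfl
      · rw [hptρ0]; exact hAsQ hp₀As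
      · rw [hptρ1]; exact hBsQ hp₁Bs
    · rw [hptne i η hη hη']; exact (hQne η hη).some_mem
  have hptcyl : ∀ (i : Fin 2) (η) (hη : η ∈ u) (j : Fin n), pt i η j = η j :=
    fun i η hη j => (hQ η hη).2.2.2 (hptQ i η hη) j
  set h : Fin 2 → (Fin n → Bool) → (Fin m → Bool) := fun i η => fun j => pt i η j with hhdef
  have hsplit : h 0 ρ ≠ h 1 ρ := by
    intro he
    apply hl
    have hc := congrFun he ⟨l, hlm⟩
    simp only [hhdef] at hc
    rwa [hptρ0, hptρ1] at hc
  have hdnh : ∀ (i : Fin 2) (η), η ∈ u → dn hle (h i η) = η := by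
    intro i η hη
    funext j
    exact hptcyl i η hη j
  set g' : (Fin m → Bool) → (Fin m → Bool) → ℕ := fun σ τ =>
    if σ = h 0 ρ ∧ τ = h 1 ρ then n₁ else if σ = h 1 ρ ∧ τ = h 0 ρ then n₂
      else g (dn hle σ) (dn hle τ) with hg'def
  refine ⟨m, hle, h 0 '' u ∪ h 1 '' u, g', h, ?_, ?_, rfl, ?_, ?_⟩
  · -- extension
    intro i η hη j
    exact hptcyl i η hη j
  · -- splitting iff
    intro η hη
    constructor
    · intro heq hηρ
      rw [hηρ] at heq
      exact hsplit heq
    · intro hηρ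
      funext j
      show pt 0 η j = pt 1 η j
      rw [hptne 0 η hη hηρ, hptne 1 η hη hηρ]
  · -- g compatibility
    intro i η hη ν hν
    have hif1 : ¬(h i η = h 0 ρ ∧ h i ν = h 1 ρ) := by
      rintro ⟨e1, e2⟩
      have hη' : η = ρ := by rw [← hdnh i η hη, e1, hdnh 0 ρ hρ]
      have hν' : ν = ρ := by rw [← hdnh i ν hν, e2, hdnh 1 ρ hρ]
      rw [hη'] at e1
      rw [hν'] at e2
      exact hsplit (e1.symm.trans e2)
    have hif2 : ¬(h i η = h 1 ρ ∧ h i ν = h 0 ρ) := by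
      rintro ⟨e1, e2⟩
      have hη' : η = ρ := by rw [← hdnh i η hη, e1, hdnh 1 ρ hρ]
      have hν' : ν = ρ := by rw [← hdnh i ν hν, e2, hdnh 0 ρ hρ]
      rw [hη'] at e1
      rw [hν'] at e2
      exact hsplit (e2.symm.trans e1)
    show g' (h i η) (h i ν) = g η ν
    simp only [hg'def]
    rw [if_neg hif1, if_neg hif2, hdnh i η hη, hdnh i ν hν]
  · -- the new configuration is in SP
    have humem : ∀ σ, σ ∈ h 0 '' u ∪ h 1 '' u →
        ∃ (i : Fin 2) (η : Fin n → Bool), η ∈ u ∧ h i η = σ := by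
      intro σ hσ
      rcases hσ with ⟨η, hη, he⟩ | ⟨η, hη, he⟩
      exacts [⟨0, η, hη, he⟩, ⟨1, η, hη, he⟩]
    have hdnσ : ∀ σ ∈ h 0 '' u ∪ h 1 '' u, dn hle σ ∈ u := by
      intro σ hσ
      obtain ⟨i, η, hη, rfl⟩ := humem σ hσ
      rw [hdnh i η hη]
      exact hη
    set base : (Fin m → Bool) → Set (ℕ → Bool) := fun σ =>
      if σ = h 0 ρ then As else if σ = h 1 ρ then Bs else Q (dn hle σ) with hbasedef
    have hbaseQ : ∀ σ ∈ h 0 '' u ∪ h 1 '' u, base σ ⊆ Q (dn hle σ) := by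
      intro σ hσ
      simp only [hbasedef]
      by_cases he0 : σ = h 0 ρ
      · rw [if_pos he0, he0, hdnh 0 ρ hρ]
        exact hAsQ
      · rw [if_neg he0]
        by_cases he1 : σ = h 1 ρ
        · rw [if_pos he1, he1, hdnh 1 ρ hρ]
          exact hBsQ
        · rw [if_neg he1]
    have hbaseperf : ∀ σ ∈ h 0 '' u ∪ h 1 '' u, Perfect (base σ) := by
      intro σ hσ
      simp only [hbasedef]
      by_cases he0 : σ = h 0 ρ
      · rw [if_pos he0]; exact hAsp
      · rw [if_neg he0]
        by_cases he1 : σ = h 1 ρ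
        · rw [if_pos he1]; exact hBsp
        · rw [if_neg he1]; exact (hQ _ (hdnσ σ hσ)).1
    have hptbase : ∀ σ ∈ h 0 '' u ∪ h 1 '' u, ∃ z, z ∈ cylm σ ∩ base σ := by
      intro σ hσ
      obtain ⟨i, η, hη, rfl⟩ := humem σ hσ
      refine ⟨pt i η, fun j => rfl, ?_⟩
      simp only [hbasedef]
      by_cases hη' : η = ρ
      · subst hη'
        have hi : i = 0 ∨ i = 1 := by omega
        rcases hi with rfl | rfl
        · rw [if_pos rfl]; rw [hptρ0]; exact hp₀As
        · rw [if_neg (fun he => hsplit he.symm), if_pos rfl, hptρ1]; exact hp₁Bs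
      · have hne0 : h i η ≠ h 0 ρ := by
          intro he
          exact hη' (by rw [← hdnh i η hη, he, hdnh 0 ρ hρ])
        have hne1 : h i η ≠ h 1 ρ := by
          intro he
          exact hη' (by rw [← hdnh i η hη, he, hdnh 1 ρ hρ])
        rw [if_neg hne0, if_neg hne1, hdnh i η hη]
        exact hptQ i η hη
    have hQ'perf : ∀ σ ∈ h 0 '' u ∪ h 1 '' u,
        Perfect (cylm σ ∩ base σ) ∧ (cylm σ ∩ base σ).Nonempty := by
      intro σ hσ
      obtain ⟨z, hz1, hz2⟩ := hptbase σ hσ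
      have hcl : IsClosed (cylm σ ∩ base σ) :=
        (isClosed_cylm σ).inter (hbaseperf σ hσ).closed
      have := (hbaseperf σ hσ).closure_nhds_inter z hz2 hz1 (isOpen_cylm σ)
      rwa [hcl.closure_eq] at this
    refine ⟨⟨h 0 ρ, Set.mem_union_left _ ⟨ρ, hρ, rfl⟩⟩, fun σ => cylm σ ∩ base σ, ?_, ?_, ?_⟩
    · intro σ hσ
      refine ⟨(hQ'perf σ hσ).1, (hQ'perf σ hσ).2, ?_, Set.inter_subset_left⟩
      exact fun z hz => (hQ _ (hdnσ σ hσ)).2.2.1 (hbaseQ σ hσ hz.2)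
    · -- rectangles
      intro σ hσ τ hτ hστ
      show (cylm σ ∩ base σ) ×ˢ (cylm τ ∩ base τ) ⊆ lim2 (Tb (g' σ τ))
      by_cases hc1 : σ = h 0 ρ ∧ τ = h 1 ρ
      · have hg : g' σ τ = n₁ := by simp only [hg'def]; exact if_pos hc1
        rw [hg]
        rintro ⟨z, w⟩ ⟨hz, hw⟩
        have hzAs : z ∈ As := by
          have hth := hz.2
          simp only [hbasedef] at hth
          rw [if_pos hc1.1] at hth
          exact hth
        have hwBs : w ∈ Bs := by
          have hth := hw.2
          simp only [hbasedef] at hth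
          rw [if_neg (by rw [hc1.2]; exact fun he => hsplit he.symm), if_pos hc1.2] at hth
          exact hth
        exact hASB (Set.mk_mem_prod hzAs hwBs)
      · by_cases hc2 : σ = h 1 ρ ∧ τ = h 0 ρ
        · have hg : g' σ τ = n₂ := by simp only [hg'def]; rw [if_neg hc1]; exact if_pos hc2
          rw [hg]
          rintro ⟨z, w⟩ ⟨hz, hw⟩
          have hzBs : z ∈ Bs := by
            have hth := hz.2
            simp only [hbasedef] at hth
            rw [if_neg (by rw [hc2.1]; exact fun he => hsplit he.symm), if_pos hc2.1] at hth
            exact hth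
          have hwAs : w ∈ As := by
            have hth := hw.2
            simp only [hbasedef] at hth
            rw [if_pos hc2.2] at hth
            exact hth
          exact hBA (Set.mk_mem_prod hzBs hwAs)
        · have hg : g' σ τ = g (dn hle σ) (dn hle τ) := by
            simp only [hg'def]; rw [if_neg hc1, if_neg hc2]
          rw [hg]
          have hdne : dn hle σ ≠ dn hle τ := by
            intro he
            obtain ⟨i, η, hη, rfl⟩ := humem σ hσ
            obtain ⟨i', ν, hν, rfl⟩ := humem τ hτ
            rw [hdnh i η hη, hdnh i' ν hν] at he
            subst he
            by_cases hη' : η = ρ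
            · subst hη'
              have hi : i = 0 ∨ i = 1 := by omega
              have hi' : i' = 0 ∨ i' = 1 := by omega
              rcases hi with rfl | rfl <;> rcases hi' with rfl | rfl
              · exact hστ rfl
              · exact hc1 ⟨rfl, rfl⟩
              · exact hc2 ⟨rfl, rfl⟩
              · exact hστ rfl
            · apply hστ
              show h i η = h i' η
              funext j
              show pt i η j = pt i' η j
              rw [hptne i η hη hη', hptne i' η hη hη']
          rintro ⟨z, w⟩ ⟨hz, hw⟩
          exact hrect _ (hdnσ σ hσ) _ (hdnσ τ hτ) hdne
            (Set.mk_mem_prod (hbaseQ σ hσ hz.2) (hbaseQ τ hτ hw.2))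
    · -- diagonal
      intro σ hσ z hz
      have hg : g' σ σ = g (dn hle σ) (dn hle σ) := by
        simp only [hg'def]
        rw [if_neg (fun hc : σ = h 0 ρ ∧ σ = h 1 ρ => hsplit (hc.1.symm.trans hc.2)),
            if_neg (fun hc : σ = h 1 ρ ∧ σ = h 0 ρ => hsplit (hc.2.symm.trans hc.1))]
      show (z, z) ∈ lim2 (Tb (g' σ σ))
      rw [hg]
      exact hdiag _ (hdnσ σ hσ) z (hbaseQ σ hσ hz.2)


/-- for an ω-sequence `T̄` of (2,2)-trees, the following are
equivalent: (a) `degsq(T̄) = ∞` (its degree exceeds every ordinal);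
(b) `degsq(T̄) ≥ ω₁`; (c) `⋃_n lim(T_n)` contains a perfect square.
Here `degsq(T̄) = sup {degsq_{T̄}(u,g) + 1}`, so `degsq(T̄) ≥ α` is rendered as
`∀ β < α, ∃ x, degsq_{T̄}(x) ≥ β`. -/
theorem stmt_12 (T : ℕ → Tree2) :
    ((∀ α : Ordinal.{0}, ∃ x : PfAp, degsqGe T α x) ↔
      (∀ β < (Cardinal.aleph 1).ord, ∃ x : PfAp, degsqGe T β x)) ∧
    ((∀ α : Ordinal.{0}, ∃ x : PfAp, degsqGe T α x) ↔
      (∃ P : Set (ℕ → Bool), Perfect P ∧ P.Nonempty ∧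
        P ×ˢ P ⊆ ⋃ n : ℕ, lim2 (T n))) := by
  have hBtoA : (∀ β < (Cardinal.aleph 1).ord, ∃ x : PfAp, degsqGe T β x) →
      ∀ α : Ordinal.{0}, ∃ x : PfAp, degsqGe T α x := by
    intro hb α
    obtain ⟨x, hx⟩ := Sω1_nonempty T hb
    exact ⟨x, good_to_all T (Sω1 T) (Sω1_step T) (Sω1_base T) α x hx⟩
  have hCtoA : (∃ P : Set (ℕ → Bool), Perfect P ∧ P.Nonempty ∧
      P ×ˢ P ⊆ ⋃ n : ℕ, lim2 (T n)) → ∀ α : Ordinal.{0}, ∃ x : PfAp, degsqGe T α x := by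
    rintro ⟨P, hP, hPne, hsq⟩ α
    obtain ⟨x, hx⟩ := SP_nonempty T P hP hPne hsq
    exact ⟨x, good_to_all T (SP T P) (SP_step T P hsq) (SP_base T P) α x hx⟩
  have hAtoC : (∀ α : Ordinal.{0}, ∃ x : PfAp, degsqGe T α x) →
      ∃ P : Set (ℕ → Bool), Perfect P ∧ P.Nonempty ∧ P ×ˢ P ⊆ ⋃ n : ℕ, lim2 (T n) := by
    intro ha
    obtain ⟨x₀, hx₀⟩ := Sω1_nonempty T (fun β _ => ha β)
    exact good_to_perfect T (Sω1 T) (Sω1_step T) (Sω1_base T) x₀ hx₀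
  exact ⟨⟨fun ha β _ => ha β, hBtoA⟩, ⟨hAtoC, hCtoA⟩⟩


end Sh522
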